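/- Let N > 2 and c ∈ (0,1). Suppose X : [t₂, T) → ℝ is differentiable, X(t₂) > N - 2, and X'(t) ≥ X(t)(X(t) - (N-2)) for all t in [t₂, T). If c = 1 - (N-2)/X(t₂), then X(t) ≥ (N-2)/(1 - c·e^{(N-2)(t - t₂)}) for all t in [t₂, T) with t - t₂ < -ln(c)/(N-2). In particular X blows up in finite time, i.e. T ≤ t₂ - ln(c)/(N-2). -/

import Mathlib

theorem stmt_4 (N c t₂ T : ℝ) (hN : 2 < N) (hc0 : 0 < c) (hc1 : c < 1)
    (hT : t₂ < T) (X X' : ℝ → ℝ)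
    (hderiv : ∀ t ∈ Set.Ico t₂ T, HasDerivAt X (X' t) t)
    (hX0 : N - 2 < X t₂)
    (hineq : ∀ t ∈ Set.Ico t₂ T, X t * (X t - (N - 2)) ≤ X' t)
    (hc : c = 1 - (N - 2) / X t₂) :
    (∀ t ∈ Set.Ico t₂ T, t - t₂ < -Real.log c / (N - 2) →
      (N - 2) / (1 - c * Real.exp ((N - 2) * (t - t₂))) ≤ X t) ∧
    T ≤ t₂ - Real.log c / (N - 2) := by
  set K := N - 2 with hKdef
  have hK : 0 < K := by simp only [hKdef]; linarith
  set B := X t₂ with hBdef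
  have hB : K < B := hX0
  have hBpos : 0 < B := lt_trans hK hB
  set M := (K + B) / 2 with hMdef
  have hKM : K < M := by rw [hMdef]; linarith
  have hMB : M < B := by rw [hMdef]; linarith
  have hMpos : 0 < M := lt_trans hK hKM
  -- Step 1: X stays ≥ M on [t₂, t] for each t in [t₂, T)
  have step1 : ∀ t ∈ Set.Ico t₂ T, ∀ s ∈ Set.Icc t₂ t, M ≤ X s := by
    intro t ht
    set S : Set ℝ := {s | s ∈ Set.Icc t₂ t ∧ ∀ r ∈ Set.Icc t₂ s, M ≤ X r} with hSdef
    have ht2S : t₂ ∈ S := by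
      refine ⟨⟨le_refl _, ht.1⟩, ?_⟩
      intro r hr
      have : r = t₂ := le_antisymm hr.2 hr.1
      rw [this]
      exact le_of_lt hMB
    have hSne : S.Nonempty := ⟨t₂, ht2S⟩
    have hSbdd : BddAbove S := ⟨t, fun s hs => hs.1.2⟩
    set σ := sSup S with hσdef
    have hσle : σ ≤ t := csSup_le hSne (fun s hs => hs.1.2)
    have hσge : t₂ ≤ σ := le_csSup hSbdd ht2S
    have hσT : σ < T := lt_of_le_of_lt hσle ht.2
    have hσS : ∀ r ∈ Set.Icc t₂ σ, M ≤ X r := by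
      intro r hr
      rcases lt_or_eq_of_le hr.2 with hlt | heq
      · obtain ⟨s, hsS, hrs⟩ := exists_lt_of_lt_csSup hSne hlt
        exact hsS.2 r ⟨hr.1, le_of_lt hrs⟩
      · rw [heq]
        rcases eq_or_lt_of_le hσge with h2 | h2
        · rw [← h2]; exact le_of_lt hMB
        · have hcont : ContinuousAt X σ := (hderiv σ ⟨hσge, hσT⟩).continuousAt
          have htend : Filter.Tendsto X (nhdsWithin σ (Set.Iio σ)) (nhds (X σ)) :=
            hcont.continuousWithinAt.tendsto
          refine ge_of_tendsto htend ?_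
          filter_upwards [Ioo_mem_nhdsLT h2] with x hx
          obtain ⟨s, hsS, hxs⟩ := exists_lt_of_lt_csSup hSne hx.2
          exact hsS.2 x ⟨le_of_lt hx.1, le_of_lt hxs⟩
    have hσeq : σ = t := by
      by_contra hne
      have hσt : σ < t := lt_of_le_of_ne hσle hne
      -- X is monotone on [t₂, σ]
      have hmono : MonotoneOn X (Set.Icc t₂ σ) := by
        apply monotoneOn_of_deriv_nonneg (convex_Icc _ _)
        · intro x hx
          exact (hderiv x ⟨hx.1, lt_of_le_of_lt hx.2 hσT⟩).continuousAt.continuousWithinAt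
        · intro x hx
          rw [interior_Icc] at hx
          exact (hderiv x ⟨le_of_lt hx.1, lt_trans hx.2 hσT⟩).differentiableAt.differentiableWithinAt
        · intro x hx
          rw [interior_Icc] at hx
          have hxT : x ∈ Set.Ico t₂ T := ⟨le_of_lt hx.1, lt_trans hx.2 hσT⟩
          rw [(hderiv x hxT).deriv]
          have hXx : M ≤ X x := hσS x ⟨le_of_lt hx.1, le_of_lt hx.2⟩
          have hI := hineq x hxT
          nlinarith
      have hXσ : B ≤ X σ :=
        hmono ⟨le_refl t₂, hσge⟩ ⟨hσge, le_refl σ⟩ hσge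
      have hcont : ContinuousAt X σ := (hderiv σ ⟨hσge, hσT⟩).continuousAt
      have hev : X ⁻¹' Set.Ioi M ∈ nhds σ :=
        hcont (Ioi_mem_nhds (lt_of_lt_of_le hMB hXσ))
      obtain ⟨ε, hε, hball⟩ := Metric.mem_nhds_iff.mp hev
      set σ' := min t (σ + ε / 2) with hσ'def
      have hσσ' : σ < σ' := lt_min hσt (by linarith)
      have hσ't : σ' ≤ t := min_le_left _ _
      have hσ'S : σ' ∈ S := by
        refine ⟨⟨le_trans hσge (le_of_lt hσσ'), hσ't⟩, ?_⟩
        intro r hr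
        rcases le_or_gt r σ with h | h
        · exact hσS r ⟨hr.1, h⟩
        · have hrσ' : r ≤ σ + ε / 2 := le_trans hr.2 (min_le_right _ _)
          have : r ∈ Metric.ball σ ε := by
            rw [Metric.mem_ball, Real.dist_eq, abs_lt]
            constructor <;> linarith
          exact le_of_lt (hball this)
      have : σ' ≤ σ := le_csSup hSbdd hσ'S
      linarith
    intro s hs
    exact hσS s (by rw [hσeq]; exact hs)
  have hXM : ∀ t ∈ Set.Ico t₂ T, M ≤ X t := fun t ht => step1 t ht t ⟨ht.1, le_refl t⟩
  have hXpos : ∀ t ∈ Set.Ico t₂ T, 0 < X t := fun t ht => lt_of_lt_of_le hMpos (hXM t ht)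
  -- Step 2: the auxiliary function v
  set v : ℝ → ℝ := fun s => (1 - K / X s) * Real.exp (-(K * (s - t₂))) with hvdef
  have hvderiv : ∀ t ∈ Set.Ico t₂ T, HasDerivAt v
      ((K * X' t / X t ^ 2) * Real.exp (-(K * (t - t₂)))
        + (1 - K / X t) * (Real.exp (-(K * (t - t₂))) * -K)) t := by
    intro t ht
    have hx : X t ≠ 0 := ne_of_gt (hXpos t ht)
    have h1 : HasDerivAt (fun s => 1 - K / X s) (K * X' t / X t ^ 2) t := by
      have h := (((hderiv t ht).inv hx).const_mul K).const_sub 1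
      have heq : K * X' t / X t ^ 2 = -(K * (-X' t / X t ^ 2)) := by ring
      rw [heq]
      simpa [div_eq_mul_inv] using h
    have hlin : HasDerivAt (fun s : ℝ => -(K * (s - t₂))) (-K) t := by
      have h := (((hasDerivAt_id' t).sub_const t₂).const_mul K).neg
      simp only [mul_one] at h
      exact h
    have h2 := hlin.exp
    exact h1.mul h2
  have hvmono : MonotoneOn v (Set.Ico t₂ T) := by
    apply monotoneOn_of_deriv_nonneg (convex_Ico _ _)
    · intro x hx
      exact (hvderiv x hx).continuousAt.continuousWithinAt
    · intro x hx
      rw [interior_Ico] at hx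
      exact (hvderiv x ⟨le_of_lt hx.1, hx.2⟩).differentiableAt.differentiableWithinAt
    · intro x hx
      rw [interior_Ico] at hx
      have hxm : x ∈ Set.Ico t₂ T := ⟨le_of_lt hx.1, hx.2⟩
      rw [(hvderiv x hxm).deriv]
      have hXx := hXM x hxm
      have hXp : 0 < X x := lt_of_lt_of_le hMpos hXx
      have hI := hineq x hxm
      have hexp : 0 < Real.exp (-(K * (x - t₂))) := Real.exp_pos _
      have key : 0 ≤ K * X' x / X x ^ 2 - K * (1 - K / X x) := by
        have h1 : K * X' x / X x ^ 2 - K * (1 - K / X x)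
            = K * (X' x - X x * (X x - K)) / X x ^ 2 := by
          field_simp
        rw [h1]
        apply div_nonneg
        · apply mul_nonneg (le_of_lt hK); linarith
        · positivity
      nlinarith [mul_nonneg key hexp.le]
  have hvt2 : v t₂ = c := by
    simp only [hvdef, sub_self, mul_zero, neg_zero, Real.exp_zero, mul_one]
    rw [hc]
  have hu : ∀ t ∈ Set.Ico t₂ T, c * Real.exp (K * (t - t₂)) ≤ 1 - K / X t := by
    intro t ht
    have h := hvmono ⟨le_refl t₂, hT⟩ ht ht.1
    rw [hvt2] at h
    simp only [hvdef] at h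
    have he : 0 < Real.exp (K * (t - t₂)) := Real.exp_pos _
    rw [Real.exp_neg] at h
    calc c * Real.exp (K * (t - t₂))
        ≤ ((1 - K / X t) * (Real.exp (K * (t - t₂)))⁻¹) * Real.exp (K * (t - t₂)) :=
          mul_le_mul_of_nonneg_right h he.le
      _ = 1 - K / X t := by field_simp
  have hlogc : Real.log c < 0 := Real.log_neg hc0 hc1
  constructor
  · intro t ht hlt
    have h := hu t ht
    have hXp := hXpos t ht
    have h1 : K * (t - t₂) < -Real.log c := by
      rw [lt_div_iff₀ hK] at hlt
      calc K * (t - t₂) = (t - t₂) * K := mul_comm _ _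
        _ < -Real.log c := hlt
    have h2 : Real.exp (K * (t - t₂)) < Real.exp (-Real.log c) := Real.exp_lt_exp.mpr h1
    rw [Real.exp_neg, Real.exp_log hc0] at h2
    have hE : c * Real.exp (K * (t - t₂)) < 1 := by
      calc c * Real.exp (K * (t - t₂)) < c * c⁻¹ := (mul_lt_mul_iff_right₀ hc0).mpr h2
        _ = 1 := mul_inv_cancel₀ (ne_of_gt hc0)
    have hD : 0 < 1 - c * Real.exp (K * (t - t₂)) := by linarith
    rw [div_le_iff₀ hD]
    have h3 : K / X t ≤ 1 - c * Real.exp (K * (t - t₂)) := by linarith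
    rw [div_le_iff₀ hXp] at h3
    nlinarith [h3]
  · by_contra hcon
    push_neg at hcon
    set τ := t₂ - Real.log c / K with hτdef
    have hτ1 : t₂ ≤ τ := by
      have : Real.log c / K < 0 := div_neg_of_neg_of_pos hlogc hK
      rw [hτdef]; linarith
    have hτm : τ ∈ Set.Ico t₂ T := ⟨hτ1, hcon⟩
    have h := hu τ hτm
    have hX := hXpos τ hτm
    have hKX : 0 < K / X τ := div_pos hK hX
    have h2 : c * Real.exp (K * (τ - t₂)) < 1 := lt_of_le_of_lt h (by linarith)
    have harg : K * (τ - t₂) = -Real.log c := by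
      rw [hτdef]
      field_simp
      ring
    rw [harg, Real.exp_neg, Real.exp_log hc0, mul_inv_cancel₀ (ne_of_gt hc0)] at h2
    exact lt_irrefl 1 h2
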